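/- Let r ∈ ℝ. Define d : ℕ × ℕ → ℝ by d(2k, 2(m-k)) = (1/√(2(cosh r + 1))) · (-tanh r)^m · √((2m)!) · √(Nat.choose (2m) (2k)) / (2^{2m-1} · m!) for all m ∈ ℕ and 0 ≤ k ≤ m, and d(j,l) = 0 whenever j or l is odd. Then Σ_{(j,l)∈ℕ×ℕ} |d(j,l)|² = 1. (This is the statement that for the squeezed-vacuum NOON state with correlated inputs, both parties detect an even photon number with probability 1, i.e. P(0,0|0,0) = P(0,0|1,1) = 1 in the two-way communication protocol.) -/

import Mathlib

open scoped BigOperators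

open Finset Polynomial

/- ## Auxiliary combinatorial lemmas -/

private lemma aux_sum_range_two_mul {M : Type*} [AddCommMonoid M] (f : ℕ → M) (n : ℕ) :
    ∑ i ∈ range (2 * n), f i = ∑ k ∈ range n, (f (2 * k) + f (2 * k + 1)) := by
  induction n with
  | zero => simp
  | succ n ih =>
      have h2 : 2 * (n + 1) = (2 * n + 1) + 1 := by ring
      rw [h2, Finset.sum_range_succ, Finset.sum_range_succ, ih, Finset.sum_range_succ]
      abel

private lemma aux_even_choose_sum (m : ℕ) :
    ∑ k ∈ range (m + 2), (2 * m + 2).choose (2 * k) = 2 ^ (2 * m + 1) := by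
  rw [Finset.sum_range_succ']
  have h1 : ∀ i, (2 * m + 2).choose (2 * (i + 1)) =
      (2 * m + 1).choose (2 * i + 1) + (2 * m + 1).choose (2 * i + 2) := by
    intro i
    have h : 2 * (i + 1) = (2 * i + 1) + 1 := by ring
    rw [h]
    simpa using Nat.choose_succ_succ (2 * m + 1) (2 * i + 1)
  simp only [h1, Nat.choose_zero_right, Nat.mul_zero]
  have h2 : ∑ i ∈ range (m + 1),
      ((2 * m + 1).choose (2 * i + 1) + (2 * m + 1).choose (2 * i + 2)) =
      ∑ j ∈ range (2 * (m + 1)), (2 * m + 1).choose (j + 1) := by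
    rw [aux_sum_range_two_mul (fun j => (2 * m + 1).choose (j + 1)) (m + 1)]
  rw [h2]
  have h3 : ∑ j ∈ range (2 * (m + 1) + 1), (2 * m + 1).choose j =
      (∑ j ∈ range (2 * (m + 1)), (2 * m + 1).choose (j + 1)) + (2 * m + 1).choose 0 := by
    rw [Finset.sum_range_succ']
  have h4 : ∑ j ∈ range (2 * (m + 1) + 1), (2 * m + 1).choose j = 2 ^ (2 * m + 1) := by
    have h5 : 2 * (m + 1) + 1 = (2 * m + 1 + 1) + 1 := by ring
    rw [h5, Finset.sum_range_succ, Nat.sum_range_choose, Nat.choose_succ_self, add_zero]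
  simp only [Nat.choose_zero_right] at h3
  omega

private lemma aux_descP_succ (q : ℚ) (n : ℕ) :
    (descPochhammer ℤ (n + 1)).smeval q = (descPochhammer ℤ n).smeval q * (q - n) := by
  rw [descPochhammer_succ_right, smeval_mul]
  simp [smeval_sub, smeval_X, smeval_natCast]

private lemma aux_descP_neg_one (m : ℕ) :
    (descPochhammer ℤ m).smeval (-1 : ℚ) = (-1) ^ m * m.factorial := by
  induction m with
  | zero => simp
  | succ m ih =>
      rw [aux_descP_succ, ih, Nat.factorial_succ]
      push_cast
      ring

private lemma aux_descP_neg_half (k : ℕ) :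
    (descPochhammer ℤ k).smeval (-(1/2) : ℚ) =
      (-1) ^ k * (2 * k).factorial / (4 ^ k * k.factorial) := by
  induction k with
  | zero => simp
  | succ k ih =>
      rw [aux_descP_succ, ih]
      have h1 : (2 * (k + 1)).factorial = (2 * k).factorial * (2 * k + 1) * (2 * k + 2) := by
        have : 2 * (k + 1) = (2 * k + 1) + 1 := by ring
        rw [this, Nat.factorial_succ, Nat.factorial_succ]
        ring
      rw [h1, Nat.factorial_succ]
      have h2 : (4 : ℚ) ^ k ≠ 0 := by positivity
      have h3 : ((k.factorial : ℚ)) ≠ 0 := Nat.cast_ne_zero.mpr k.factorial_ne_zero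
      field_simp
      push_cast
      ring

private lemma aux_ringChoose_neg_one (m : ℕ) : Ring.choose (-1 : ℚ) m = (-1) ^ m := by
  have h := Ring.descPochhammer_eq_factorial_smul_choose (-1 : ℚ) m
  rw [aux_descP_neg_one, nsmul_eq_mul] at h
  have h3 : ((m.factorial : ℚ)) ≠ 0 := Nat.cast_ne_zero.mpr m.factorial_ne_zero
  exact (mul_left_cancel₀ h3 (show (m.factorial : ℚ) * ((-1) ^ m) =
    (m.factorial : ℚ) * Ring.choose (-1 : ℚ) m by linear_combination h)).symm

private lemma aux_centralBinom_cast (k : ℕ) :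
    ((2 * k).factorial : ℚ) = (Nat.centralBinom k : ℚ) * (k.factorial : ℚ) ^ 2 := by
  have h5 := Nat.choose_mul_factorial_mul_factorial (show k ≤ 2 * k by omega)
  have h6 : 2 * k - k = k := by omega
  rw [h6] at h5
  rw [Nat.centralBinom]
  push_cast [← h5]
  ring

private lemma aux_ringChoose_neg_half (k : ℕ) :
    Ring.choose (-(1/2) : ℚ) k = (-1) ^ k * (Nat.centralBinom k : ℚ) / 4 ^ k := by
  have h := Ring.descPochhammer_eq_factorial_smul_choose (-(1/2) : ℚ) k
  rw [aux_descP_neg_half, nsmul_eq_mul] at h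
  have h3 : ((k.factorial : ℚ)) ≠ 0 := Nat.cast_ne_zero.mpr k.factorial_ne_zero
  have h2 : (4 : ℚ) ^ k ≠ 0 := by positivity
  rw [aux_centralBinom_cast, div_eq_iff (mul_ne_zero h2 h3)] at h
  have hf2 : ((k.factorial : ℚ)) ^ 2 ≠ 0 := pow_ne_zero _ h3
  have key := mul_left_cancel₀ hf2
    (show ((k.factorial : ℚ)) ^ 2 * ((-1) ^ k * (Nat.centralBinom k : ℚ)) =
      ((k.factorial : ℚ)) ^ 2 * (Ring.choose (-(1/2) : ℚ) k * 4 ^ k) by linear_combination h)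
  rw [eq_div_iff h2]
  linarith [key]

private lemma aux_conv_identity (m : ℕ) :
    ∑ ij ∈ antidiagonal m, (Nat.centralBinom ij.1 : ℚ) * (Nat.centralBinom ij.2 : ℚ)
      = 4 ^ m := by
  have h := Ring.add_choose_eq (r := (-(1/2) : ℚ)) (s := (-(1/2) : ℚ)) m (Commute.all _ _)
  have hsum : (-(1/2) : ℚ) + -(1/2) = -1 := by norm_num
  rw [hsum, aux_ringChoose_neg_one] at h
  simp only [aux_ringChoose_neg_half] at h
  have h2 : ∀ ij ∈ antidiagonal m,
      (-1 : ℚ) ^ ij.1 * (Nat.centralBinom ij.1 : ℚ) / 4 ^ ij.1 *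
        ((-1) ^ ij.2 * (Nat.centralBinom ij.2 : ℚ) / 4 ^ ij.2) =
      ((-1) ^ m / 4 ^ m) * ((Nat.centralBinom ij.1 : ℚ) * (Nat.centralBinom ij.2 : ℚ)) := by
    intro ij hij
    have hm : ij.1 + ij.2 = m := Finset.HasAntidiagonal.mem_antidiagonal.mp hij
    rw [← hm, pow_add, pow_add]
    field_simp
  rw [Finset.sum_congr rfl h2, ← Finset.mul_sum] at h
  have h4 : ((-1 : ℚ) ^ m) ≠ 0 := by simp
  have h5 : (4 : ℚ) ^ m ≠ 0 := by positivity
  field_simp at h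
  linarith [h]

private lemma aux_conv_identity_real (m : ℕ) :
    ∑ ij ∈ antidiagonal m, (Nat.centralBinom ij.1 : ℝ) * (Nat.centralBinom ij.2 : ℝ)
      = 4 ^ m := by
  have hq := aux_conv_identity m
  have hnat : ∑ ij ∈ antidiagonal m, Nat.centralBinom ij.1 * Nat.centralBinom ij.2 = 4 ^ m := by
    have : ((∑ ij ∈ antidiagonal m, Nat.centralBinom ij.1 * Nat.centralBinom ij.2 : ℕ) : ℚ)
        = ((4 ^ m : ℕ) : ℚ) := by
      push_cast
      exact hq
    exact_mod_cast this
  exact_mod_cast congrArg (Nat.cast (R := ℝ)) hnat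

private lemma aux_choose_le_two_pow (n i : ℕ) : n.choose i ≤ 2 ^ n := by
  rcases le_or_gt i n with h | h
  · calc n.choose i ≤ ∑ j ∈ range (n + 1), n.choose j :=
        Finset.single_le_sum (fun j _ => Nat.zero_le _) (Finset.mem_range.mpr (by omega))
      _ = 2 ^ n := Nat.sum_range_choose n
  · rw [Nat.choose_eq_zero_of_lt h]
    exact Nat.zero_le _

private lemma aux_centralBinom_le (k : ℕ) : (Nat.centralBinom k : ℝ) ≤ 4 ^ k := by
  have h := aux_choose_le_two_pow (2 * k) k
  rw [Nat.centralBinom_eq_two_mul_choose]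
  calc ((2 * k).choose k : ℝ) ≤ ((2 : ℝ)) ^ (2 * k) := by exact_mod_cast h
    _ = 4 ^ k := by rw [pow_mul]; norm_num

private lemma aux_choose_le_real (m i : ℕ) : (((2 * m).choose i : ℕ) : ℝ) ≤ 4 ^ m := by
  have h := aux_choose_le_two_pow (2 * m) i
  calc (((2 * m).choose i : ℕ) : ℝ) ≤ ((2 : ℝ)) ^ (2 * m) := by exact_mod_cast h
    _ = 4 ^ m := by rw [pow_mul]; norm_num

private lemma aux_centralBinom_cast_real (k : ℕ) :
    ((2 * k).factorial : ℝ) = (Nat.centralBinom k : ℝ) * (k.factorial : ℝ) ^ 2 := by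
  exact_mod_cast congrArg (Rat.cast (K := ℝ)) (aux_centralBinom_cast k)

/- ## Regrouping a double sum along antidiagonals -/

private lemma aux_tsum_antidiag {F : ℕ × ℕ → ℝ} (h : Summable F) :
    ∑' p : ℕ × ℕ, F p = ∑' n : ℕ, ∑ kl ∈ Finset.HasAntidiagonal.antidiagonal n, F kl := by
  rw [← Finset.HasAntidiagonal.sigmaAntidiagonalEquivProd.tsum_eq F]
  have h2 : Summable (F ∘ Finset.HasAntidiagonal.sigmaAntidiagonalEquivProd) :=
    (Finset.HasAntidiagonal.sigmaAntidiagonalEquivProd.summable_iff).mpr h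
  rw [show (fun x : Σ n : ℕ, {x // x ∈ Finset.HasAntidiagonal.antidiagonal n} =>
      F (Finset.HasAntidiagonal.sigmaAntidiagonalEquivProd x)) = F ∘ Finset.HasAntidiagonal.sigmaAntidiagonalEquivProd from rfl,
    Summable.tsum_sigma h2]
  refine tsum_congr fun n => ?_
  rw [← Finset.sum_finset_coe, ← tsum_fintype (L := SummationFilter.unconditional _)]
  rfl

/-- For the squeezed-vacuum NOON state with correlated inputs, both parties
detect an even photon number with probability 1: the output coefficients,
supported on pairs of even photon numbers, are normalized. -/
theorem squeezed_NOON_correlated_parity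
    (r : ℝ) (d : ℕ × ℕ → ℝ)
    (hd : ∀ m k : ℕ, k ≤ m →
      d (2 * k, 2 * (m - k)) =
        (1 / Real.sqrt (2 * (Real.cosh r + 1))) * (-Real.tanh r) ^ m *
          Real.sqrt (Nat.factorial (2 * m) : ℝ) *
          Real.sqrt (Nat.choose (2 * m) (2 * k) : ℝ) /
          ((2 : ℝ) ^ (2 * (m : ℤ) - 1) * (Nat.factorial m : ℝ)))
    (hd_odd : ∀ j l : ℕ, Odd j ∨ Odd l → d (j, l) = 0) :
    ∑' p : ℕ × ℕ, |d p| ^ 2 = 1 := by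
  set t : ℝ := Real.tanh r with htdef
  set c : ℝ := Real.cosh r with hcdef
  have hc1 : 1 ≤ c := Real.one_le_cosh r
  have hcpos : 0 < c := lt_of_lt_of_le one_pos hc1
  have hcne : c ≠ 0 := ne_of_gt hcpos
  have hsq : c ^ 2 - Real.sinh r ^ 2 = 1 := Real.cosh_sq_sub_sinh_sq r
  have ht2lt : t ^ 2 < 1 := by
    rw [htdef, Real.tanh_eq_sinh_div_cosh, div_pow, div_lt_one (by positivity)]
    nlinarith [hsq]
  have ht2nn : (0 : ℝ) ≤ t ^ 2 := sq_nonneg t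
  -- the central-binomial series
  set b : ℕ → ℝ := fun k => (Nat.centralBinom k : ℝ) * (t ^ 2 / 4) ^ k with hbdef
  have hb_nonneg : ∀ k, 0 ≤ b k := by
    intro k
    apply mul_nonneg (Nat.cast_nonneg _)
    positivity
  have hb_le : ∀ k, b k ≤ (t ^ 2) ^ k := by
    intro k
    have h1 : b k = (Nat.centralBinom k : ℝ) / 4 ^ k * (t ^ 2) ^ k := by
      simp only [hbdef]
      rw [div_pow]; ring
    rw [h1]
    have h2 : (Nat.centralBinom k : ℝ) / 4 ^ k ≤ 1 := by
      rw [div_le_one (by positivity)]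
      exact aux_centralBinom_le k
    calc (Nat.centralBinom k : ℝ) / 4 ^ k * (t ^ 2) ^ k ≤ 1 * (t ^ 2) ^ k :=
        mul_le_mul_of_nonneg_right h2 (by positivity)
      _ = (t ^ 2) ^ k := one_mul _
  have hgeo : Summable (fun k : ℕ => (t ^ 2) ^ k) := summable_geometric_of_lt_one ht2nn ht2lt
  have hb_summ : Summable b := Summable.of_nonneg_of_le hb_nonneg hb_le hgeo
  have hbb : Summable (fun p : ℕ × ℕ => b p.1 * b p.2) :=
    hb_summ.mul_of_nonneg hb_summ hb_nonneg hb_nonneg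
  have hconvR : ∀ n, ∑ kl ∈ antidiagonal n, b kl.1 * b kl.2 = (t ^ 2) ^ n := by
    intro n
    have e1 : ∀ kl ∈ antidiagonal n, b kl.1 * b kl.2 =
        ((Nat.centralBinom kl.1 : ℝ) * (Nat.centralBinom kl.2 : ℝ)) * (t ^ 2 / 4) ^ n := by
      intro kl hkl
      have hm : kl.1 + kl.2 = n := Finset.HasAntidiagonal.mem_antidiagonal.mp hkl
      simp only [hbdef]
      rw [mul_mul_mul_comm, ← pow_add, hm]
    rw [Finset.sum_congr rfl e1, ← Finset.sum_mul, aux_conv_identity_real, div_pow]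
    field_simp
  have hCauchy : (∑' k, b k) * (∑' k, b k) = ∑' n : ℕ, (t ^ 2) ^ n := by
    rw [Summable.tsum_mul_tsum_eq_tsum_sum_antidiagonal hb_summ hb_summ hbb]
    exact tsum_congr hconvR
  have hgeosum : ∑' n : ℕ, (t ^ 2) ^ n = (1 - t ^ 2)⁻¹ :=
    tsum_geometric_of_lt_one ht2nn ht2lt
  have hone : (1 - t ^ 2)⁻¹ = c ^ 2 := by
    have h1 : 1 - t ^ 2 = (c ^ 2)⁻¹ := by
      rw [htdef, Real.tanh_eq_sinh_div_cosh, div_pow]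
      rw [← hcdef]
      field_simp
      linarith [hsq]
    rw [h1, inv_inv]
  have hBsum : ∑' k, b k = c := by
    have h1 : (∑' k, b k) ^ 2 = c ^ 2 := by rw [sq, hCauchy, hgeosum, hone]
    have h2 : 0 ≤ ∑' k, b k := tsum_nonneg hb_nonneg
    calc ∑' k, b k = Real.sqrt ((∑' k, b k) ^ 2) := (Real.sqrt_sq h2).symm
      _ = Real.sqrt (c ^ 2) := by rw [h1]
      _ = c := Real.sqrt_sq hcpos.le
  -- the squared coefficients
  set A2 : ℝ := (2 * (c + 1))⁻¹ with hA2def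
  have hA2pos : 0 < A2 := by rw [hA2def]; positivity
  have hAsq : (1 / Real.sqrt (2 * (c + 1))) ^ 2 = A2 := by
    rw [div_pow, one_pow, Real.sq_sqrt (by positivity), hA2def, one_div]
  set g : ℕ × ℕ → ℝ := fun q =>
    A2 * 4 * ((2 * (q.1 + q.2)).factorial : ℝ) * (((2 * (q.1 + q.2)).choose (2 * q.1)) : ℝ) *
      (t ^ 2) ^ (q.1 + q.2) / (16 ^ (q.1 + q.2) * (((q.1 + q.2).factorial : ℝ)) ^ 2) with hgdef
  have hzp : ∀ m : ℕ, (2 : ℝ) ^ (2 * (m : ℤ) - 1) = 4 ^ m / 2 := by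
    intro m
    rw [zpow_sub₀ (two_ne_zero), zpow_one]
    congr 1
    rw [show (2 * (m : ℤ)) = ((2 * m : ℕ) : ℤ) by push_cast; ring, zpow_natCast, pow_mul]
    norm_num
  have hval : ∀ k l : ℕ, |d (2 * k, 2 * l)| ^ 2 = g (k, l) := by
    intro k l
    have hm : k ≤ k + l := Nat.le_add_right _ _
    have hd1 := hd (k + l) k hm
    have hll : (k + l) - k = l := by omega
    rw [hll] at hd1
    have hfacne : ((k + l).factorial : ℝ) ≠ 0 := Nat.cast_ne_zero.mpr (Nat.factorial_ne_zero _)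
    have e1 : Real.sqrt ((2 * (k + l)).factorial : ℝ) ^ 2 = ((2 * (k + l)).factorial : ℝ) :=
      Real.sq_sqrt (Nat.cast_nonneg _)
    have e2 : Real.sqrt (((2 * (k + l)).choose (2 * k)) : ℝ) ^ 2 =
        (((2 * (k + l)).choose (2 * k)) : ℝ) := Real.sq_sqrt (Nat.cast_nonneg _)
    have e3 : ((-t) ^ (k + l)) ^ 2 = (t ^ 2) ^ (k + l) := by
      rw [← pow_mul, mul_comm (k + l) 2, pow_mul, neg_sq]
    have h16 : ((4 : ℝ) ^ (k + l)) ^ 2 = 16 ^ (k + l) := by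
      rw [← pow_mul, mul_comm (k + l) 2, pow_mul]
      norm_num
    rw [sq_abs, hd1, hzp (k + l)]
    simp only [hgdef]
    rw [div_pow, mul_pow, mul_pow, mul_pow, hAsq, e1, e2, e3, mul_pow, div_pow, h16]
    have h4 : (16 : ℝ) ^ (k + l) ≠ 0 := by positivity
    field_simp
    ring
  have hval' : ∀ q : ℕ × ℕ, |d (2 * q.1, 2 * q.2)| ^ 2 = g q := fun q => hval q.1 q.2
  -- summability of g
  have hg_nonneg : ∀ q, 0 ≤ g q := by
    intro q
    rw [← hval' q]
    positivity
  have hg_le : ∀ q : ℕ × ℕ, g q ≤ (4 * A2 * (t ^ 2) ^ q.1) * ((t ^ 2) ^ q.2) := by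
    intro q
    set m := q.1 + q.2 with hmdef
    have key : g q = 4 * A2 * ((Nat.centralBinom m : ℝ) * (((2 * m).choose (2 * q.1)) : ℝ)
        / 16 ^ m) * (t ^ 2) ^ m := by
      simp only [hgdef, ← hmdef]
      rw [aux_centralBinom_cast_real m]
      have hfacne : ((m.factorial : ℝ)) ≠ 0 := Nat.cast_ne_zero.mpr (Nat.factorial_ne_zero _)
      field_simp
    rw [key]
    have hb1 : (Nat.centralBinom m : ℝ) * (((2 * m).choose (2 * q.1)) : ℝ) / 16 ^ m ≤ 1 := by
      rw [div_le_one (by positivity)]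
      have h16 : (16 : ℝ) ^ m = 4 ^ m * 4 ^ m := by rw [← mul_pow]; norm_num
      rw [h16]
      exact mul_le_mul (aux_centralBinom_le m) (aux_choose_le_real m (2 * q.1))
        (Nat.cast_nonneg _) (by positivity)
    have hpow : (t ^ 2) ^ m = (t ^ 2) ^ q.1 * (t ^ 2) ^ q.2 := by
      rw [hmdef, pow_add]
    calc 4 * A2 * ((Nat.centralBinom m : ℝ) * (((2 * m).choose (2 * q.1)) : ℝ) / 16 ^ m) *
          (t ^ 2) ^ m
        ≤ 4 * A2 * 1 * (t ^ 2) ^ m := by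
          apply mul_le_mul_of_nonneg_right _ (by positivity)
          apply mul_le_mul_of_nonneg_left hb1 (by positivity)
      _ = (4 * A2 * (t ^ 2) ^ q.1) * ((t ^ 2) ^ q.2) := by rw [hpow]; ring
  have hgsum : Summable g := by
    apply Summable.of_nonneg_of_le hg_nonneg hg_le
    exact (hgeo.mul_left (4 * A2)).mul_of_nonneg hgeo
      (fun k => by positivity) (fun k => by positivity)
  -- reindexing
  have hinj : Function.Injective (fun q : ℕ × ℕ => ((2 * q.1, 2 * q.2) : ℕ × ℕ)) := by
    intro a b h
    simp only [Prod.ext_iff] at h ⊢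
    omega
  have hsupp : Function.support (fun p : ℕ × ℕ => |d p| ^ 2) ⊆
      Set.range (fun q : ℕ × ℕ => ((2 * q.1, 2 * q.2) : ℕ × ℕ)) := by
    intro p hp
    rcases Nat.even_or_odd p.1 with h1 | h1
    · rcases Nat.even_or_odd p.2 with h2 | h2
      · obtain ⟨a, ha⟩ := h1
        obtain ⟨bb, hb2⟩ := h2
        exact ⟨(a, bb), by simp [Prod.ext_iff]; omega⟩
      · exfalso
        apply hp
        have : d p = 0 := by
          rw [show p = (p.1, p.2) from rfl]
          exact hd_odd p.1 p.2 (Or.inr h2)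
        simp [this]
    · exfalso
      apply hp
      have : d p = 0 := by
        rw [show p = (p.1, p.2) from rfl]
        exact hd_odd p.1 p.2 (Or.inl h1)
      simp [this]
  have hstep1 : ∑' q : ℕ × ℕ, |d (2 * q.1, 2 * q.2)| ^ 2 = ∑' p : ℕ × ℕ, |d p| ^ 2 :=
    hinj.tsum_eq hsupp
  rw [← hstep1, tsum_congr hval', aux_tsum_antidiag hgsum]
  -- evaluate the antidiagonal sums
  have hTn : ∀ n, ∑ kl ∈ antidiagonal n, g kl =
      2 * A2 * b n + (if n = 0 then 2 * A2 else 0) := by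
    intro n
    rw [Finset.Nat.sum_antidiagonal_eq_sum_range_succ_mk]
    have hsum : ∀ k ∈ range (n + 1), g (k, n - k) =
        (A2 * 4 * ((2 * n).factorial : ℝ) * (t ^ 2) ^ n /
          (16 ^ n * ((n.factorial : ℝ)) ^ 2)) * (((2 * n).choose (2 * k)) : ℝ) := by
      intro k hk
      have hkn : k ≤ n := Nat.lt_succ_iff.mp (Finset.mem_range.mp hk)
      have h : k + (n - k) = n := by omega
      simp only [hgdef, h]
      ring
    rw [show Finset.range n.succ = Finset.range (n + 1) from rfl,
      Finset.sum_congr rfl hsum, ← Finset.mul_sum]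
    cases n with
    | zero =>
        simp only [if_pos rfl]
        have hb0 : b 0 = 1 := by simp [hbdef, Nat.centralBinom]
        rw [hb0]
        push_cast
        norm_num
        ring
    | succ m =>
        have hE : ∑ k ∈ range (m + 2), (((2 * (m + 1)).choose (2 * k)) : ℝ) =
            2 ^ (2 * m + 1) := by
          have h := aux_even_choose_sum m
          have h2 : 2 * (m + 1) = 2 * m + 2 := by ring
          rw [h2]
          exact_mod_cast congrArg (Nat.cast (R := ℝ)) h
        rw [show m + 1 + 1 = m + 2 from rfl, hE, if_neg (Nat.succ_ne_zero m)]
        rw [add_zero]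
        simp only [hbdef]
        rw [aux_centralBinom_cast_real (m + 1)]
        have hfacne : (((m + 1).factorial : ℝ)) ≠ 0 := Nat.cast_ne_zero.mpr (Nat.factorial_ne_zero _)
        have h16 : (16 : ℝ) ^ (m + 1) = 4 ^ (m + 1) * 4 ^ (m + 1) := by rw [← mul_pow]; norm_num
        have h2p : (2 : ℝ) ^ (2 * m + 1) = 2 * 4 ^ m := by
          rw [pow_succ', pow_mul]
          norm_num
        have h4p : (4 : ℝ) ^ (m + 1) = 4 * 4 ^ m := by rw [pow_succ]; ring
        rw [h16, h2p, h4p]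
        have h4ne : (4 : ℝ) ^ m ≠ 0 := by positivity
        field_simp
        have h14 : ((1 : ℝ) / 4) ^ m * 4 ^ m = 1 := by rw [← mul_pow]; norm_num
        linear_combination (-((Nat.centralBinom (m + 1) : ℝ) * t ^ 2 * t ^ (m * 2))) * h14
  rw [tsum_congr hTn,
    Summable.tsum_add (hb_summ.mul_left (2 * A2)) ((hasSum_ite_eq (0 : ℕ) (2 * A2)).summable),
    tsum_mul_left, hBsum, tsum_ite_eq]
  rw [hA2def]
  have hc1ne : c + 1 ≠ 0 := by positivity
  field_simp
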